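/- Suppose ρ: (θ₀−δ, θ₀+δ) → [0,∞) is such that on each of countably many disjoint open intervals (α_k, β_k) it equals a C¹ function ρ_k ≥ 0 vanishing at the endpoints, with bounds sup_{(α_k,β_k)} ρ_k ≤ C sup_{[α_k,β_k]} |h(θ)| and |ρ_k'(θ)| ≤ C(|h(θ)| + √(ρ_k(θ))), where h is continuous and h(θ') = 0, and ρ = 0 off the union of the intervals. Then ρ is differentiable at θ' with ρ(θ') = 0 and ρ'(θ') = 0, and ρ' is continuous at θ'. -/

import Mathlib

open Set Filter

lemma expaux {x : ℝ} (hx : 0 ≤ x) : Real.exp x - 1 ≤ x * Real.exp x := by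
  have h1 := Real.add_one_le_exp (-x)
  have h2 : Real.exp (-x) * Real.exp x = 1 := by
    rw [← Real.exp_add]; simp
  nlinarith [Real.exp_pos x]
lemma lemG (C ε lam a b : ℝ) (hC : 0 < C) (hε : 0 ≤ ε) (hlam : 0 < lam) (hab : a < b)
    (f f' : ℝ → ℝ) (hfc : ContinuousOn f (Icc a b))
    (hf0 : f a = 0) (hnn : ∀ x ∈ Icc a b, 0 ≤ f x)
    (hd : ∀ x ∈ Ioo a b, HasDerivAt f (f' x) x)
    (hb : ∀ x ∈ Ioo a b, |f' x| ≤ C * (ε + Real.sqrt (f x))) :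
    f b ≤ (C * ε + C * lam / 2) * Real.exp (C * (b - a) / (2 * lam)) * (b - a) := by
  set K : ℝ := C / (2 * lam) with hK
  have hKpos : 0 < K := by positivity
  set ε₀ : ℝ := C * ε + C * lam / 2 with hε₀
  have hε₀pos : 0 < ε₀ := by positivity
  -- linear bound on derivative
  have hlin : ∀ x ∈ Ioo a b, ‖f' x‖ ≤ K * ‖f x‖ + ε₀ := by
    intro x hx
    have hfx : 0 ≤ f x := hnn x (Ioo_subset_Icc_self hx)
    have hlam' : lam ≠ 0 := hlam.ne'
    have hs2 : Real.sqrt (f x) ≤ (f x + lam ^ 2) / (2 * lam) := by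
      rw [le_div_iff₀ (by positivity)]
      nlinarith [Real.sq_sqrt hfx, sq_nonneg (Real.sqrt (f x) - lam)]
    have heq : C * (ε + (f x + lam ^ 2) / (2 * lam)) = K * f x + ε₀ := by
      rw [hK, hε₀]; field_simp; ring
    rw [Real.norm_eq_abs, Real.norm_eq_abs, abs_of_nonneg hfx]
    calc |f' x| ≤ C * (ε + Real.sqrt (f x)) := hb x hx
      _ ≤ C * (ε + (f x + lam ^ 2) / (2 * lam)) := by nlinarith [hs2]
      _ = K * f x + ε₀ := heq
  -- bound for each μ > 0
  have key : ∀ μ : ℝ, 0 < μ → f b ≤ μ * Real.exp (K * (b - a)) + ε₀ * Real.exp (K * (b - a)) * (b - a) := by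
    intro μ hμ
    -- find a' close to a with f a' ≤ μ
    have hcwa : Filter.Tendsto f (nhdsWithin a (Icc a b)) (nhds 0) := by
      have := hfc a (left_mem_Icc.mpr hab.le)
      rwa [ContinuousWithinAt, hf0] at this
    have hne : (nhdsWithin a (Ioo a b)).NeBot := by
      rw [← mem_closure_iff_nhdsWithin_neBot, closure_Ioo hab.ne]
      exact left_mem_Icc.mpr hab.le
    have hev : ∀ᶠ x in nhdsWithin a (Ioo a b), f x < μ :=
      (hcwa.mono_left (nhdsWithin_mono a Ioo_subset_Icc_self)).eventually (gt_mem_nhds hμ)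
    obtain ⟨a', ha'f, ha'⟩ := (hev.and (eventually_mem_nhdsWithin)).exists
    have hgr := norm_le_gronwallBound_of_norm_deriv_right_le (f := f) (f' := f')
      (δ := μ) (K := K) (ε := ε₀) (a := a') (b := b)
      (hfc.mono (Icc_subset_Icc ha'.1.le le_rfl))
      (fun x hx => (hd x ⟨lt_of_lt_of_le ha'.1 hx.1, hx.2⟩).hasDerivWithinAt)
      (by rw [Real.norm_eq_abs, abs_of_nonneg (hnn a' (Ioo_subset_Icc_self ha'))]; exact ha'f.le)
      (fun x hx => hlin x ⟨lt_of_lt_of_le ha'.1 hx.1, hx.2⟩)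
      b (right_mem_Icc.mpr ha'.2.le)
    rw [Real.norm_eq_abs, abs_of_nonneg (hnn b (right_mem_Icc.mpr hab.le))] at hgr
    rw [gronwallBound_of_K_ne_0 hKpos.ne'] at hgr
    have hle : b - a' ≤ b - a := by linarith [ha'.1]
    have hexp : Real.exp (K * (b - a')) ≤ Real.exp (K * (b - a)) :=
      Real.exp_le_exp.mpr (by nlinarith)
    have hx0 : 0 ≤ K * (b - a') := by nlinarith [ha'.2]
    have hea := expaux hx0
    calc f b ≤ μ * Real.exp (K * (b - a')) + ε₀ / K * (Real.exp (K * (b - a')) - 1) := hgr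
      _ ≤ μ * Real.exp (K * (b - a)) + ε₀ / K * (K * (b - a') * Real.exp (K * (b - a'))) := by
          have h1 : μ * Real.exp (K * (b - a')) ≤ μ * Real.exp (K * (b - a)) := by nlinarith
          have h2 : ε₀ / K * (Real.exp (K * (b - a')) - 1) ≤ ε₀ / K * (K * (b - a') * Real.exp (K * (b - a'))) := by
            apply mul_le_mul_of_nonneg_left hea (by positivity)
          linarith
      _ = μ * Real.exp (K * (b - a)) + ε₀ * ((b - a') * Real.exp (K * (b - a'))) := by
          field_simp
      _ ≤ μ * Real.exp (K * (b - a)) + ε₀ * Real.exp (K * (b - a)) * (b - a) := by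
          have hub : (b - a') * Real.exp (K * (b - a')) ≤ (b - a) * Real.exp (K * (b - a)) := by
            apply mul_le_mul hle hexp (Real.exp_pos _).le (by linarith)
          nlinarith
  -- take μ → 0
  have target : f b ≤ ε₀ * Real.exp (K * (b - a)) * (b - a) := by
    apply le_of_forall_pos_le_add
    intro μ' hμ'
    have hE : 0 < Real.exp (K * (b - a)) := Real.exp_pos _
    have := key (μ' / Real.exp (K * (b - a))) (by positivity)
    calc f b ≤ μ' / Real.exp (K * (b - a)) * Real.exp (K * (b - a)) + ε₀ * Real.exp (K * (b - a)) * (b - a) := this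
      _ = ε₀ * Real.exp (K * (b - a)) * (b - a) + μ' := by field_simp; ring
  convert target using 3
  rw [hK]; ring

lemma lemG' (C ε lam a b : ℝ) (hC : 0 < C) (hε : 0 ≤ ε) (hlam : 0 < lam) (hab : a < b)
    (f f' : ℝ → ℝ) (hfc : ContinuousOn f (Icc a b))
    (hfb : f b = 0) (hnn : ∀ x ∈ Icc a b, 0 ≤ f x)
    (hd : ∀ x ∈ Ioo a b, HasDerivAt f (f' x) x)
    (hb : ∀ x ∈ Ioo a b, |f' x| ≤ C * (ε + Real.sqrt (f x))) :
    f a ≤ (C * ε + C * lam / 2) * Real.exp (C * (b - a) / (2 * lam)) * (b - a) := by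
  have hmaps : ∀ x ∈ Icc a b, a + b - x ∈ Icc a b := by
    intro x hx
    exact ⟨by linarith [hx.2], by linarith [hx.1]⟩
  have hmaps' : ∀ x ∈ Ioo a b, a + b - x ∈ Ioo a b := by
    intro x hx
    exact ⟨by linarith [hx.2], by linarith [hx.1]⟩
  have hcomp : ContinuousOn (fun x => f (a + b - x)) (Icc a b) := by
    apply hfc.comp (Continuous.continuousOn (by continuity)) hmaps
  have key := lemG C ε lam a b hC hε hlam hab (fun x => f (a + b - x))
    (fun x => -f' (a + b - x)) hcomp (by simp [hfb]) (fun x hx => hnn _ (hmaps x hx))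
    (fun x hx => by
      have h1 : HasDerivAt (fun x : ℝ => a + b - x) (-1) x := by
        simpa using (hasDerivAt_id x).const_sub (a + b)
      have h2 := hd _ (hmaps' x hx)
      have := HasDerivAt.comp x h2 h1
      exact this.congr_deriv (by ring))
    (fun x hx => by
      simpa [abs_neg] using hb _ (hmaps' x hx))
  simpa using key

set_option maxHeartbeats 1000000


/-- the event horizon graph `ρ = ρ(θ)` glued from countably many
`C¹` characteristic arcs `ρ_k ≥ 0` over disjoint intervals `(α_k, β_k)`
(vanishing at the endpoints, with `ρ_k ≤ C·sup|h|` on the interval and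
`|ρ_k'| ≤ C(|h| + √ρ_k)`), and `ρ = 0` off the union, is differentiable at a point
`θ'` with `h(θ') = 0`, with `ρ(θ') = 0`, `ρ'(θ') = 0`, and `deriv ρ` continuous
at `θ'`. -/
theorem stmt12 (θ' δ C : ℝ) (hδ : 0 < δ) (hC : 0 < C)
    (ρ : ℝ → ℝ) (h : ℝ → ℝ) (hh : Continuous h) (hhθ' : h θ' = 0)
    (α β : ℕ → ℝ) (ρk : ℕ → ℝ → ℝ)
    (hαβ : ∀ k, α k < β k)
    (hsub : ∀ k, Ioo (α k) (β k) ⊆ Ioo (θ' - δ) (θ' + δ))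
    (hdisj : ∀ k l, k ≠ l → Disjoint (Ioo (α k) (β k)) (Ioo (α l) (β l)))
    (hglue : ∀ k, ∀ θ ∈ Ioo (α k) (β k), ρ θ = ρk k θ)
    (hnonneg : ∀ k, ∀ θ ∈ Icc (α k) (β k), 0 ≤ ρk k θ)
    (hcont : ∀ k, ContinuousOn (ρk k) (Icc (α k) (β k)))
    (hends : ∀ k, ρk k (α k) = 0 ∧ ρk k (β k) = 0)
    (hC1 : ∀ k, ∀ θ ∈ Ioo (α k) (β k), HasDerivAt (ρk k) (deriv (ρk k) θ) θ)
    (hsup : ∀ k, ∀ θ ∈ Ioo (α k) (β k), ∃ s ∈ Icc (α k) (β k), ρk k θ ≤ C * |h s|)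
    (hder : ∀ k, ∀ θ ∈ Ioo (α k) (β k),
      |deriv (ρk k) θ| ≤ C * (|h θ| + Real.sqrt (ρk k θ)))
    (hzero : ∀ θ ∈ Ioo (θ' - δ) (θ' + δ),
      θ ∉ (⋃ k, Ioo (α k) (β k)) → ρ θ = 0)
    (hnotin : ∀ k, θ' ∉ Ioo (α k) (β k)) :
    ρ θ' = 0 ∧ HasDerivAt ρ 0 θ' ∧
      Filter.Tendsto (deriv ρ) (nhds θ') (nhds 0) := by
  have hρnn : ∀ s ∈ Ioo (θ' - δ) (θ' + δ), 0 ≤ ρ s := by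
    intro s hs
    by_cases hmem : s ∈ ⋃ k, Ioo (α k) (β k)
    · obtain ⟨k, hk⟩ := mem_iUnion.mp hmem
      rw [hglue k s hk]
      exact hnonneg k s (Ioo_subset_Icc_self hk)
    · rw [hzero s hs hmem]
  have hρθ' : ρ θ' = 0 := by
    apply hzero θ' ⟨by linarith, by linarith⟩
    rw [mem_iUnion]; rintro ⟨k, hk⟩; exact hnotin k hk
  -- MAIN estimate
  have main : ∀ ε' : ℝ, 0 < ε' → ∃ η : ℝ, 0 < η ∧ η ≤ δ ∧
      ∀ θ s : ℝ, |θ - θ'| < η → |s - θ'| < η → (∀ k, θ ∉ Ioo (α k) (β k)) →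
        ρ s ≤ ε' * |s - θ| := by
    intro ε' hε'
    set M : ℝ := Real.exp C with hM
    have hMpos : 0 < M := Real.exp_pos C
    set lam : ℝ := ε' / (C * M) with hlam
    have hlampos : 0 < lam := by positivity
    set ε : ℝ := ε' / (2 * C * M) with hε
    have hεpos : 0 < ε := by positivity
    obtain ⟨η₁, hη₁pos, hη₁⟩ := Metric.continuous_iff.mp hh θ' ε hεpos
    refine ⟨min η₁ (min lam δ), lt_min hη₁pos (lt_min hlampos hδ),
      le_trans (min_le_right _ _) (min_le_right _ _), ?_⟩
    set η : ℝ := min η₁ (min lam δ) with hηdef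
    intro θ s hθ hs hθnot
    have hηδ : η ≤ δ := le_trans (min_le_right _ _) (min_le_right _ _)
    have hηlam : η ≤ lam := le_trans (min_le_right _ _) (min_le_left _ _)
    have hηη₁ : η ≤ η₁ := min_le_left _ _
    have habs_s := abs_lt.mp hs
    have habs_θ := abs_lt.mp hθ
    have hsδ : s ∈ Ioo (θ' - δ) (θ' + δ) := ⟨by linarith, by linarith⟩
    have hhb : ∀ u : ℝ, θ' - η < u → u < θ' + η → |h u| ≤ ε := by
      intro u h1 h2
      have := hη₁ u (by rw [Real.dist_eq, abs_lt]; constructor <;> linarith)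
      rw [Real.dist_eq, hhθ', sub_zero] at this
      exact this.le
    have hcoeff : C * ε + C * lam / 2 = ε' / M := by
      rw [hε, hlam]; field_simp; ring
    by_cases hmem : s ∈ ⋃ k, Ioo (α k) (β k)
    · obtain ⟨k, hk⟩ := mem_iUnion.mp hmem
      have hsθ : s ≠ θ := by rintro rfl; exact hθnot k hk
      rcases hsθ.lt_or_gt with hlt | hgt
      · -- s < θ : then β k ≤ θ, use lemG' on [s, β k]
        have hβθ : β k ≤ θ := by
          by_contra hcon
          push_neg at hcon
          exact hθnot k ⟨lt_trans hk.1 hlt, hcon⟩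
        have key := lemG' C ε lam s (β k) hC hεpos.le hlampos hk.2
          (ρk k) (deriv (ρk k))
          ((hcont k).mono (Icc_subset_Icc hk.1.le le_rfl))
          (hends k).2
          (fun x hx => hnonneg k x (Icc_subset_Icc hk.1.le le_rfl hx))
          (fun x hx => hC1 k x ⟨lt_trans hk.1 hx.1, hx.2⟩)
          (fun x hx => by
            have hx' : x ∈ Ioo (α k) (β k) := ⟨lt_trans hk.1 hx.1, hx.2⟩
            refine le_trans (hder k x hx') ?_
            have hhx : |h x| ≤ ε := hhb x (by linarith [hx.1]) (by linarith [hx.2])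
            nlinarith [Real.sqrt_nonneg (ρk k x)])
        have hexp : Real.exp (C * (β k - s) / (2 * lam)) ≤ M := by
          rw [hM]
          apply Real.exp_le_exp.mpr
          rw [div_le_iff₀ (by positivity)]
          have h2 : β k - s ≤ 2 * lam := by linarith
          nlinarith
        have hθs : |s - θ| = θ - s := by
          rw [abs_sub_comm]; exact abs_of_pos (by linarith)
        rw [hglue k s hk, hθs]
        calc ρk k s ≤ (C * ε + C * lam / 2) * Real.exp (C * (β k - s) / (2 * lam)) * (β k - s) := key
          _ ≤ ε' / M * M * (θ - s) := by
              have h1 : 0 ≤ β k - s := by linarith [hk.2]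
              have h2 : β k - s ≤ θ - s := by linarith
              have h3 : 0 ≤ C * ε + C * lam / 2 := by positivity
              have h4 : (0:ℝ) < Real.exp (C * (β k - s) / (2 * lam)) := Real.exp_pos _
              rw [hcoeff]
              apply mul_le_mul _ h2 h1 (by positivity)
              exact mul_le_mul le_rfl hexp h4.le (by positivity)
          _ = ε' * (θ - s) := by field_simp
      · -- θ < s : then θ ≤ α k, use lemG on [α k, s]
        have hαθ : θ ≤ α k := by
          by_contra hcon
          push_neg at hcon
          exact hθnot k ⟨hcon, lt_trans hgt hk.2⟩
        have key := lemG C ε lam (α k) s hC hεpos.le hlampos hk.1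
          (ρk k) (deriv (ρk k))
          ((hcont k).mono (Icc_subset_Icc le_rfl hk.2.le))
          (hends k).1
          (fun x hx => hnonneg k x (Icc_subset_Icc le_rfl hk.2.le hx))
          (fun x hx => hC1 k x ⟨hx.1, lt_trans hx.2 hk.2⟩)
          (fun x hx => by
            have hx' : x ∈ Ioo (α k) (β k) := ⟨hx.1, lt_trans hx.2 hk.2⟩
            refine le_trans (hder k x hx') ?_
            have hhx : |h x| ≤ ε := hhb x (by linarith [hx.1]) (by linarith [hx.2])
            nlinarith [Real.sqrt_nonneg (ρk k x)])
        have hexp : Real.exp (C * (s - α k) / (2 * lam)) ≤ M := by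
          rw [hM]
          apply Real.exp_le_exp.mpr
          rw [div_le_iff₀ (by positivity)]
          have h2 : s - α k ≤ 2 * lam := by linarith
          nlinarith
        have hθs : |s - θ| = s - θ := abs_of_pos (by linarith)
        rw [hglue k s hk, hθs]
        calc ρk k s ≤ (C * ε + C * lam / 2) * Real.exp (C * (s - α k) / (2 * lam)) * (s - α k) := key
          _ ≤ ε' / M * M * (s - θ) := by
              have h1 : 0 ≤ s - α k := by linarith [hk.1]
              have h2 : s - α k ≤ s - θ := by linarith
              have h4 : (0:ℝ) < Real.exp (C * (s - α k) / (2 * lam)) := Real.exp_pos _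
              rw [hcoeff]
              apply mul_le_mul _ h2 h1 (by positivity)
              exact mul_le_mul le_rfl hexp h4.le (by positivity)
          _ = ε' * (s - θ) := by field_simp
    · rw [hzero s hsδ hmem]
      positivity
  -- Derivative at θ' is 0
  have hd0 : HasDerivAt ρ 0 θ' := by
    rw [hasDerivAt_iff_tendsto_slope]
    rw [Metric.tendsto_nhds]
    intro ε₀ hε₀
    obtain ⟨η, hηpos, hηδ, hmain⟩ := main (ε₀ / 2) (by positivity)
    have hball : Metric.ball θ' η ∈ nhdsWithin θ' {θ'}ᶜ :=
      nhdsWithin_le_nhds (Metric.ball_mem_nhds θ' hηpos)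
    filter_upwards [hball, self_mem_nhdsWithin] with u hu hne
    rw [Metric.mem_ball, Real.dist_eq] at hu
    have hune : u ≠ θ' := hne
    have hub := hmain θ' u (by simpa using hηpos) hu hnotin
    have huδ : u ∈ Ioo (θ' - δ) (θ' + δ) := by
      have := abs_lt.mp hu
      constructor <;> [linarith [this.1]; linarith [this.2]]
    have hupos : 0 ≤ ρ u := hρnn u huδ
    have habs : (0:ℝ) < |u - θ'| := abs_pos.mpr (sub_ne_zero.mpr hune)
    rw [Real.dist_eq, sub_zero, slope_def_field, hρθ', sub_zero, div_eq_mul_inv,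
      abs_mul, abs_inv, abs_of_nonneg hupos]
    calc ρ u * |u - θ'|⁻¹ ≤ (ε₀ / 2 * |u - θ'|) * |u - θ'|⁻¹ := by
          apply mul_le_mul_of_nonneg_right hub (by positivity)
      _ = ε₀ / 2 := by field_simp
      _ < ε₀ := by linarith
  refine ⟨hρθ', hd0, ?_⟩
  -- Continuity of deriv ρ at θ'
  rw [Metric.tendsto_nhds]
  intro ε₀ hε₀
  obtain ⟨η, hηpos, hηδ, hmain⟩ := main (ε₀ / 2) (by positivity)
  obtain ⟨η₂, hη₂pos, hη₂⟩ := Metric.continuous_iff.mp hh θ' (ε₀ / (4 * C)) (by positivity)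
  obtain ⟨η₃, hη₃pos, hη₃eq⟩ : ∃ x : ℝ, 0 < x ∧ ε₀ / 2 * x = (ε₀ / (4 * C)) ^ 2 :=
    ⟨(ε₀ / (4 * C)) ^ 2 / (ε₀ / 2), by positivity, by
      rw [mul_comm, div_mul_cancel₀ _ (by positivity : (ε₀:ℝ) / 2 ≠ 0)]⟩
  set η' : ℝ := min η (min η₂ η₃) with hη'def
  have hη'pos : 0 < η' := lt_min hηpos (lt_min hη₂pos hη₃pos)
  have hη'η : η' ≤ η := min_le_left _ _
  have hη'η₂ : η' ≤ η₂ := le_trans (min_le_right _ _) (min_le_left _ _)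
  have hη'η₃ : η' ≤ η₃ := le_trans (min_le_right _ _) (min_le_right _ _)
  filter_upwards [Metric.ball_mem_nhds θ' hη'pos] with u hu
  rw [Metric.mem_ball, Real.dist_eq] at hu
  have huη : |u - θ'| < η := lt_of_lt_of_le hu hη'η
  have huδ : u ∈ Ioo (θ' - δ) (θ' + δ) := by
    have := abs_lt.mp huη
    constructor <;> [linarith [this.1]; linarith [this.2]]
  rw [Real.dist_eq, sub_zero]
  by_cases hmem : u ∈ ⋃ k, Ioo (α k) (β k)
  · obtain ⟨k, hk⟩ := mem_iUnion.mp hmem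
    have hev : ρ =ᶠ[nhds u] ρk k :=
      eventually_of_mem (isOpen_Ioo.mem_nhds hk) (hglue k)
    rw [hev.deriv_eq]
    have hderb := hder k u hk
    have hhu : |h u| ≤ ε₀ / (4 * C) := by
      have := hη₂ u (by rw [Real.dist_eq]; exact lt_of_lt_of_le hu hη'η₂)
      rw [Real.dist_eq, hhθ', sub_zero] at this
      exact this.le
    have hρu : ρk k u ≤ (ε₀ / (4 * C)) ^ 2 := by
      have h1 := hmain θ' u (by simpa using hηpos) huη hnotin
      rw [hglue k u hk] at h1
      calc ρk k u ≤ ε₀ / 2 * |u - θ'| := h1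
        _ ≤ ε₀ / 2 * η₃ := by
            apply mul_le_mul_of_nonneg_left (le_trans hu.le hη'η₃) (by positivity)
        _ = (ε₀ / (4 * C)) ^ 2 := hη₃eq
    have hsq : Real.sqrt (ρk k u) ≤ ε₀ / (4 * C) := by
      calc Real.sqrt (ρk k u) ≤ Real.sqrt ((ε₀ / (4 * C)) ^ 2) := Real.sqrt_le_sqrt hρu
        _ = ε₀ / (4 * C) := Real.sqrt_sq (by positivity)
    calc |deriv (ρk k) u| ≤ C * (|h u| + Real.sqrt (ρk k u)) := hderb
      _ ≤ C * (ε₀ / (4 * C) + ε₀ / (4 * C)) := by nlinarith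
      _ = ε₀ / 2 := by
          have hC0 : C ≠ 0 := hC.ne'
          field_simp; ring
      _ < ε₀ := by linarith
  · -- off the intervals
    have hρu : ρ u = 0 := hzero u huδ hmem
    have hnotin' : ∀ k, u ∉ Ioo (α k) (β k) := by
      intro k hk; exact hmem (mem_iUnion.mpr ⟨k, hk⟩)
    by_cases hdiff : DifferentiableAt ℝ ρ u
    · have hslope := hasDerivAt_iff_tendsto_slope.mp hdiff.hasDerivAt
      have hbound : |deriv ρ u| ≤ ε₀ / 2 := by
        apply le_of_tendsto hslope.abs
        have hballu : Metric.ball θ' η ∈ nhdsWithin u {u}ᶜ :=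
          nhdsWithin_le_nhds (Metric.isOpen_ball.mem_nhds (by
            rw [Metric.mem_ball, Real.dist_eq]; exact huη))
        filter_upwards [hballu, self_mem_nhdsWithin] with v hv hvne
        rw [Metric.mem_ball, Real.dist_eq] at hv
        have hvu : v ≠ u := hvne
        have hvδ : v ∈ Ioo (θ' - δ) (θ' + δ) := by
          have := abs_lt.mp hv
          constructor <;> [linarith [this.1]; linarith [this.2]]
        have hvb := hmain u v huη hv hnotin'
        have habs : (0:ℝ) < |v - u| := abs_pos.mpr (sub_ne_zero.mpr hvu)
        rw [slope_def_field, hρu, sub_zero, div_eq_mul_inv, abs_mul, abs_inv,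
          abs_of_nonneg (hρnn v hvδ)]
        calc ρ v * |v - u|⁻¹ ≤ (ε₀ / 2 * |v - u|) * |v - u|⁻¹ := by
              apply mul_le_mul_of_nonneg_right hvb (by positivity)
          _ = ε₀ / 2 := by field_simp
      linarith [hbound]
    · rw [deriv_zero_of_not_differentiableAt hdiff]
      simpa using hε₀
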